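/- arXiv:0904.0817 — 3 statements merged into one kernel-verified Lean document; each statement's English description precedes it below -/
import Mathlib

section
/- Let λ be a strongly inaccessible cardinal, let ⟨θ_ζ : ζ < λ⟩ be a sequence of infinite cardinals with θ_ζ < λ for every ζ < λ, and let κ ≥ λ be a cardinal. If there is a family {g_i : i < κ} ⊆ ∏_{ζ<λ} θ_ζ which is cofinal modulo J^bd_λ (i.e. for every f ∈ ∏_{ζ<λ} θ_ζ there is i < κ with f ≤* g_i), then the space ^λ2 equipped with the <λ-box topology is the union of κ nowhere dense sets (hence cov_λ(meagre) ≤ κ). -/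
open Cardinal Set

/-- The type of ordinals below `o`, serving as the domain `λ` (for `o = λ.ord`). -/
abbrev Blw (o : Ordinal.{0}) := {α : Ordinal.{0} // α < o}

/-- The space `^λ2` of functions from `λ` to `2` (for `o = λ.ord`). -/
abbrev CSp (o : Ordinal.{0}) := Blw o → Bool

/-- The cylinder `[ν] = {η ∈ ^λ2 : ν ⊴ η}` determined by `ν : β → 2`, `β < o`. -/
def cylC (o β : Ordinal.{0}) (ν : Blw β → Bool) : Set (CSp o) :=
  {η | ∀ (α : Ordinal.{0}) (hβ : α < β) (ho : α < o), η ⟨α, ho⟩ = ν ⟨α, hβ⟩}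

/-- The `<λ`-box topology on `^λ2`: generated by the cylinders `[ν]`, `ν : β → 2`,
`β < o` (its open sets are exactly the unions of such cylinders). -/
def boxC (o : Ordinal.{0}) : TopologicalSpace (CSp o) :=
  TopologicalSpace.generateFrom
    {S | ∃ β : Ordinal.{0}, β < o ∧ ∃ ν : Blw β → Bool, S = cylC o β ν}

/-- The product `∏_{ζ<λ} θ_ζ` (for `o = λ.ord`), as the set of functions
`η : λ → Ord` with `η ζ < θ ζ` for all `ζ < λ`. -/
def PSp (o : Ordinal.{0}) (θ : Blw o → Cardinal.{0}) : Type 1 :=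
  {η : Blw o → Ordinal.{0} // ∀ ζ, η ζ < (θ ζ).ord}

/-- The cylinder `[ν] = {η ∈ ∏_{ζ<λ} θ_ζ : ν ⊴ η}` determined by
`ν : ∏_{ζ<β} θ_ζ`, `β < o`. -/
def cylP (o : Ordinal.{0}) (θ : Blw o → Cardinal.{0}) (β : Ordinal.{0})
    (ν : Blw β → Ordinal.{0}) : Set (PSp o θ) :=
  {η | ∀ (α : Ordinal.{0}) (hβ : α < β) (ho : α < o), η.1 ⟨α, ho⟩ = ν ⟨α, hβ⟩}

/-- The `<λ`-box topology on `∏_{ζ<λ} θ_ζ`: generated by the cylinders `[ν]`,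
`ν ∈ ∏_{ζ<β} θ_ζ`, `β < o` (its open sets are exactly the unions of such
cylinders). -/
def boxP (o : Ordinal.{0}) (θ : Blw o → Cardinal.{0}) : TopologicalSpace (PSp o θ) :=
  TopologicalSpace.generateFrom
    {S | ∃ β : Ordinal.{0}, β < o ∧ ∃ ν : Blw β → Ordinal.{0},
      (∀ (α : Ordinal.{0}) (hβ : α < β) (ho : α < o), ν ⟨α, hβ⟩ < (θ ⟨α, ho⟩).ord) ∧
      S = cylP o θ β ν}


section CodeAux

/-- The set of candidate codes of `η` at block `[ζ, ζ + θ ζ)`. -/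
def codeSet (lam : Cardinal.{0}) (θ : Blw lam.ord → Cardinal.{0})
    (ζ : Blw lam.ord) (η : CSp lam.ord) : Set Ordinal.{0} :=
  {α | ∃ h : ζ.1 + α < lam.ord, α < (θ ζ).ord ∧ η ⟨ζ.1 + α, h⟩ = true}

/-- The ordinal `< θ ζ` coded by `η` on the block `[ζ, ζ + θ ζ)`: the least `α`
with `η (ζ + α) = true`, or `0` if there is none. -/
noncomputable def code (lam : Cardinal.{0}) (θ : Blw lam.ord → Cardinal.{0})
    (ζ : Blw lam.ord) (η : CSp lam.ord) : Ordinal.{0} :=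
  sInf (codeSet lam θ ζ η)

theorem code_lt (lam : Cardinal.{0}) (θ : Blw lam.ord → Cardinal.{0})
    (ζ : Blw lam.ord) (η : CSp lam.ord) (hθ : ℵ₀ ≤ θ ζ) :
    code lam θ ζ η < (θ ζ).ord := by
  rcases (codeSet lam θ ζ η).eq_empty_or_nonempty with h | h
  · rw [code, h, Ordinal.sInf_empty]
    exact (Cardinal.isSuccLimit_ord hθ).pos
  · obtain ⟨_, h1, _⟩ := csInf_mem h
    exact h1

theorem code_congr (lam : Cardinal.{0}) (θ : Blw lam.ord → Cardinal.{0})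
    (ζ : Blw lam.ord) (η₁ η₂ : CSp lam.ord)
    (h : ∀ (α : Ordinal.{0}) (_h1 : α < ζ.1 + (θ ζ).ord) (ho : α < lam.ord),
      η₁ ⟨α, ho⟩ = η₂ ⟨α, ho⟩) :
    code lam θ ζ η₁ = code lam θ ζ η₂ := by
  unfold code
  congr 1
  ext α
  simp only [codeSet, Set.mem_setOf_eq]
  constructor
  · rintro ⟨hh, hα, ht⟩
    exact ⟨hh, hα, by rw [← h _ ((add_lt_add_iff_left ζ.1).2 hα) hh]; exact ht⟩
  · rintro ⟨hh, hα, ht⟩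
    exact ⟨hh, hα, by rw [h _ ((add_lt_add_iff_left ζ.1).2 hα) hh]; exact ht⟩

end CodeAux

/-- let `λ` be strongly inaccessible, `⟨θ_ζ : ζ < λ⟩` infinite
cardinals below `λ`, and `κ ≥ λ`.  If `{g_i : i < κ} ⊆ ∏_{ζ<λ} θ_ζ` is cofinal
modulo `J^bd_λ`, then `^λ2` with the `<λ`-box topology is the union of `κ`
nowhere dense sets (hence `cov_λ(meagre) ≤ κ`). -/
theorem cantor_union_nowhereDense (lam κ : Cardinal.{0}) (hinacc : lam.IsInaccessible)
    (θ : Blw lam.ord → Cardinal.{0}) (hθ : ∀ ζ, ℵ₀ ≤ θ ζ ∧ θ ζ < lam)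
    (hκ : lam ≤ κ)
    (g : Blw κ.ord → PSp lam.ord θ)
    (hcof : ∀ f : PSp lam.ord θ, ∃ i : Blw κ.ord, ∃ β < lam.ord,
      ∀ ζ : Blw lam.ord, β ≤ ζ.1 → f.1 ζ ≤ (g i).1 ζ) :
    ∃ A : Blw κ.ord → Set (CSp lam.ord),
      (∀ i, @IsNowhereDense _ (boxC lam.ord) (A i)) ∧ (⋃ i, A i) = Set.univ := by
  classical
  letI : TopologicalSpace (CSp lam.ord) := boxC lam.ord
  have haleph : ℵ₀ ≤ lam := hinacc.1.le
  have hlamlim : Order.IsSuccLimit lam.ord := Cardinal.isSuccLimit_ord haleph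
  have hθord : ∀ ζ, (θ ζ).ord < lam.ord := fun ζ => Cardinal.ord_lt_ord.2 (hθ ζ).2
  have hlim : ∀ ζ, Order.IsSuccLimit (θ ζ).ord := fun ζ => Cardinal.isSuccLimit_ord (hθ ζ).1
  have hadd : ∀ {a b : Ordinal.{0}}, a < lam.ord → b < lam.ord → a + b < lam.ord := by
    intro a b ha hb
    rw [Cardinal.lt_ord] at ha hb ⊢
    rw [Ordinal.card_add]
    exact Cardinal.add_lt_of_lt haleph ha hb
  -- the cylinders form a topological basis for the box topology
  have hbasis : TopologicalSpace.IsTopologicalBasis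
      {S | ∃ β : Ordinal.{0}, β < lam.ord ∧ ∃ ν : Blw β → Bool, S = cylC lam.ord β ν} := by
    have key : ∀ (β₁ β₂ : Ordinal.{0}), β₁ ≤ β₂ → ∀ (ν₁ : Blw β₁ → Bool) (ν₂ : Blw β₂ → Bool)
        (x : CSp lam.ord), x ∈ cylC lam.ord β₁ ν₁ → x ∈ cylC lam.ord β₂ ν₂ →
        cylC lam.ord β₂ ν₂ ⊆ cylC lam.ord β₁ ν₁ := by
      intro β₁ β₂ hle ν₁ ν₂ x hx₁ hx₂ η hη α hβ ho
      have h2 : α < β₂ := lt_of_lt_of_le hβ hle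
      rw [hη α h2 ho, ← hx₂ α h2 ho, hx₁ α hβ ho]
    refine ⟨?_, ?_, rfl⟩
    · rintro t₁ ⟨β₁, hβ₁, ν₁, rfl⟩ t₂ ⟨β₂, hβ₂, ν₂, rfl⟩ x ⟨hx₁, hx₂⟩
      rcases le_total β₁ β₂ with hle | hle
      · exact ⟨cylC lam.ord β₂ ν₂, ⟨β₂, hβ₂, ν₂, rfl⟩, hx₂,
          Set.subset_inter (key β₁ β₂ hle ν₁ ν₂ x hx₁ hx₂) subset_rfl⟩
      · exact ⟨cylC lam.ord β₁ ν₁, ⟨β₁, hβ₁, ν₁, rfl⟩, hx₁,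
          Set.subset_inter subset_rfl (key β₂ β₁ hle ν₂ ν₁ x hx₂ hx₁)⟩
    · apply Set.eq_univ_of_forall
      intro x
      refine Set.mem_sUnion.2 ⟨cylC lam.ord 0 (fun y => (not_lt_zero y.2).elim),
        ⟨0, hlamlim.pos, _, rfl⟩, ?_⟩
      intro α hβ _
      exact absurd hβ (not_lt_zero)
  -- the basic nowhere dense sets
  set Apre : Blw κ.ord → Blw lam.ord → Set (CSp lam.ord) := fun i b =>
    {η | ∀ ζ : Blw lam.ord, b.1 ≤ ζ.1 → code lam θ ζ η ≤ (g i).1 ζ} with hApre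
  -- each `Apre i b` is closed
  have hclosed : ∀ i b, IsClosed (Apre i b) := by
    intro i b
    rw [← isOpen_compl_iff, hbasis.isOpen_iff]
    intro η hη
    simp only [hApre, Set.mem_compl_iff, Set.mem_setOf_eq, not_forall] at hη
    obtain ⟨ζ, hbζ, hgt⟩ := hη
    have hδ : ζ.1 + (θ ζ).ord < lam.ord := hadd ζ.2 (hθord ζ)
    refine ⟨cylC lam.ord (ζ.1 + (θ ζ).ord) (fun x => η ⟨x.1, lt_trans x.2 hδ⟩),
      ⟨_, hδ, _, rfl⟩, fun α hβ ho => rfl, ?_⟩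
    intro η' hη'
    simp only [hApre, Set.mem_compl_iff, Set.mem_setOf_eq, not_forall]
    refine ⟨ζ, hbζ, ?_⟩
    have hcc : code lam θ ζ η' = code lam θ ζ η :=
      code_congr lam θ ζ η' η (fun α h1 ho => hη' α h1 ho)
    rw [hcc]
    exact hgt
  -- each `Apre i b` has empty interior
  have hint : ∀ i b, interior (Apre i b) = ∅ := by
    intro i b
    rw [Set.eq_empty_iff_forall_notMem]
    intro x hx
    obtain ⟨t, ⟨β₀, hβ₀, ν, rfl⟩, hxt, hsub⟩ :=
      hbasis.exists_subset_of_mem_open hx isOpen_interior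
    have hsub' : cylC lam.ord β₀ ν ⊆ Apre i b := hsub.trans interior_subset
    set ζ : Blw lam.ord := ⟨max b.1 β₀, max_lt b.2 hβ₀⟩ with hζ
    set v : Ordinal.{0} := (g i).1 ζ + 1 with hv
    have hvθ : v < (θ ζ).ord := by
      rw [hv, Ordinal.add_one_eq_succ]
      exact (hlim ζ).succ_lt ((g i).2 ζ)
    set η : CSp lam.ord := fun α =>
      if h : α.1 < β₀ then ν ⟨α.1, h⟩ else decide (α.1 = ζ.1 + v) with hηdef
    have hmem : η ∈ cylC lam.ord β₀ ν := by
      intro α hβ ho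
      simp only [hηdef]
      rw [dif_pos hβ]
    have hnotlt : ∀ α : Ordinal.{0}, ¬ (ζ.1 + α < β₀) := by
      intro α
      exact not_lt.2 (le_trans (le_max_right b.1 β₀) (le_self_add (a := ζ.1) (b := α)))
    have hcode : code lam θ ζ η = v := by
      have hset : codeSet lam θ ζ η = {v} := by
        ext α
        simp only [codeSet, Set.mem_setOf_eq, Set.mem_singleton_iff]
        constructor
        · rintro ⟨h, hα, ht⟩
          simp only [hηdef] at ht
          rw [dif_neg (hnotlt α)] at ht
          exact (add_right_inj ζ.1).1 (of_decide_eq_true ht)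
        · rintro rfl
          refine ⟨hadd ζ.2 (lt_trans hvθ (hθord ζ)), hvθ, ?_⟩
          simp only [hηdef]
          rw [dif_neg (hnotlt v)]
          simp
      rw [code, hset, csInf_singleton]
    have hmem' : η ∈ Apre i b := hsub' hmem
    have hle := hmem' ζ (le_max_left b.1 β₀)
    rw [hcode] at hle
    have : (g i).1 ζ < v := by
      rw [hv, Ordinal.add_one_eq_succ]
      exact Order.lt_succ _
    exact absurd hle (not_le.2 this)
  -- a surjection from `Blw κ.ord` onto pairs
  have hmkκ : #(Blw κ.ord) = Cardinal.lift.{1} κ := by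
    have h := Ordinal.mk_Iio_ordinal κ.ord
    rw [Cardinal.card_ord] at h
    exact h
  have hmkl : #(Blw lam.ord) = Cardinal.lift.{1} lam := by
    have h := Ordinal.mk_Iio_ordinal lam.ord
    rw [Cardinal.card_ord] at h
    exact h
  have hκ0 : ℵ₀ ≤ κ := haleph.trans hκ
  have hmul : κ * lam = κ :=
    Cardinal.mul_eq_left hκ0 hκ (Cardinal.aleph0_pos.trans hinacc.1).ne'
  have hs : Nonempty (Blw κ.ord ≃ (Blw κ.ord × Blw lam.ord)) := by
    rw [← Cardinal.eq, Cardinal.mk_prod, Cardinal.lift_id, Cardinal.lift_id,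
      hmkκ, hmkl, ← Cardinal.lift_mul, hmul]
  obtain ⟨e⟩ := hs
  refine ⟨fun a => Apre (e a).1 (e a).2, fun a => ?_, ?_⟩
  · exact ((hclosed (e a).1 (e a).2).isNowhereDense_iff).2 (hint (e a).1 (e a).2)
  · apply Set.eq_univ_of_forall
    intro η
    have hf : ∀ ζ, code lam θ ζ η < (θ ζ).ord := fun ζ => code_lt lam θ ζ η (hθ ζ).1
    obtain ⟨i, β, hβ, hble⟩ := hcof ⟨fun ζ => code lam θ ζ η, hf⟩
    obtain ⟨a, ha⟩ := e.surjective (i, ⟨β, hβ⟩)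
    refine Set.mem_iUnion.2 ⟨a, ?_⟩
    rw [ha]
    intro ζ hζ
    exact hble ζ hζ
end

section
/- Let λ be a regular uncountable cardinal and ⟨θ_ε : ε < λ⟩ a sequence of infinite cardinals below λ. Then the map F : ^λ2 → ∏_{ε<λ} θ_ε given by F(η)(ε) = 0 if η(s(ε)+i) = 0 for all i < θ_ε, and F(η)(ε) = 1+i where i < θ_ε is least with η(s(ε)+i) = 1 otherwise, is well-defined (in particular s(ε) < λ and 1+i < θ_ε for all i < θ_ε) and continuous with respect to the <λ-box topologies on ^λ2 and on ∏_{ε<λ} θ_ε. -/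
open Cardinal Set

/-- `blockSum t ε = Σ_{ζ<ε} t ζ` (ordinal sum): `0` at `0`, `blockSum t δ + t δ`
at `δ+1`, and the supremum at limits. -/
noncomputable def blockSum (t : Ordinal.{0} → Ordinal.{0}) (ε : Ordinal.{0}) : Ordinal.{0} :=
  Ordinal.limitRecOn ε 0 (fun δ ih => ih + t δ)
    (fun δ _ ih => ⨆ β : Set.Iio δ, ih β.1 β.2)

/-- `sFn lam θ ε = s(ε) = Σ_{ζ<ε} θ_ζ` (ordinal sum). -/
noncomputable def sFn (lam : Cardinal.{0}) (θ : Blw lam.ord → Cardinal.{0}) :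
    Ordinal.{0} → Ordinal.{0} :=
  blockSum (fun ζ => if h : ζ < lam.ord then (θ ⟨ζ, h⟩).ord else 0)

/-- `F : ^λ2 → ∏_{ε<λ} θ_ε` is the block-coding map: `F(η)(ε) = 0` if
`η(s(ε)+i) = 0` for all `i < θ_ε`, and `F(η)(ε) = 1+i` for the least `i < θ_ε`
with `η(s(ε)+i) = 1` otherwise. -/
def FSpec (lam : Cardinal.{0}) (θ : Blw lam.ord → Cardinal.{0})
    (F : CSp lam.ord → PSp lam.ord θ) : Prop :=
  ∀ (η : CSp lam.ord) (ε : Blw lam.ord),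
    ((∀ i < (θ ε).ord, ∀ h : sFn lam θ ε.1 + i < lam.ord,
        η ⟨sFn lam θ ε.1 + i, h⟩ = false) → (F η).1 ε = 0) ∧
    (∀ i < (θ ε).ord, ∀ h : sFn lam θ ε.1 + i < lam.ord,
        η ⟨sFn lam θ ε.1 + i, h⟩ = true →
        (∀ j < i, ∀ h' : sFn lam θ ε.1 + j < lam.ord,
          η ⟨sFn lam θ ε.1 + j, h'⟩ = false) →
        (F η).1 ε = 1 + i)

/-! ### Auxiliary lemmas -/

theorem blockSum_zero (t : Ordinal.{0} → Ordinal.{0}) : blockSum t 0 = 0 :=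
  Ordinal.limitRecOn_zero ..

theorem blockSum_succ (t : Ordinal.{0} → Ordinal.{0}) (δ : Ordinal.{0}) :
    blockSum t (Order.succ δ) = blockSum t δ + t δ :=
  Ordinal.limitRecOn_succ ..

theorem blockSum_limit (t : Ordinal.{0} → Ordinal.{0}) (δ : Ordinal.{0}) (h : Order.IsSuccLimit δ) :
    blockSum t δ = ⨆ β : Set.Iio δ, blockSum t β.1 :=
  Ordinal.limitRecOn_limit _ _ _ _ h

theorem blockSum_mono (t : Ordinal.{0} → Ordinal.{0}) :
    ∀ ε', ∀ ε ≤ ε', blockSum t ε ≤ blockSum t ε' := by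
  intro ε'
  induction ε' using Ordinal.limitRecOn with
  | zero =>
    intro ε hε
    rw [le_zero_iff.mp hε]
  | add_one δ ih =>
    intro ε hε
    rcases eq_or_lt_of_le hε with rfl | hlt
    · exact le_rfl
    · rw [Ordinal.add_one_eq_succ, blockSum_succ]
      exact (ih ε (Order.lt_succ_iff.mp hlt)).trans (le_self_add)
  | limit δ hδ ih =>
    intro ε hε
    rcases eq_or_lt_of_le hε with rfl | hlt
    · exact le_rfl
    · rw [blockSum_limit t δ hδ]
      exact Ordinal.le_iSup (fun β : Set.Iio δ => blockSum t β.1) ⟨ε, hlt⟩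

theorem sFn_lt_of_lt {lam : Cardinal.{0}} (hreg : lam.IsRegular)
    (θ : Blw lam.ord → Cardinal.{0}) (hθ : ∀ ζ, ℵ₀ ≤ θ ζ ∧ θ ζ < lam) :
    ∀ ε < lam.ord, sFn lam θ ε < lam.ord := by
  have hω : Ordinal.omega0 ≤ lam.ord := by
    rw [← Cardinal.ord_aleph0]; exact Cardinal.ord_le_ord.mpr hreg.aleph0_le
  intro ε
  induction ε using Ordinal.limitRecOn with
  | zero =>
    intro _
    rw [sFn, blockSum_zero]
    exact lt_of_lt_of_le Ordinal.omega0_pos hω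
  | add_one δ ih =>
    intro h
    have hδ : δ < lam.ord := (Order.lt_succ δ).trans h
    rw [sFn, Ordinal.add_one_eq_succ, blockSum_succ, dif_pos hδ]
    exact Ordinal.isPrincipal_add_ord hreg.aleph0_le (ih hδ)
      (Cardinal.ord_lt_ord.mpr (hθ ⟨δ, hδ⟩).2)
  | limit δ hlim ih =>
    intro h
    rw [sFn, blockSum_limit _ _ hlim]
    set t : Ordinal.{0} → Ordinal.{0} :=
      fun ζ => if h : ζ < lam.ord then (θ ⟨ζ, h⟩).ord else 0 with ht
    have key : (⨆ β : Set.Iio δ, blockSum t β.1)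
        = ⨆ x : δ.ToType, blockSum t ((Ordinal.ToType.mk (o := δ)).symm x).1 := by
      apply le_antisymm
      · refine Ordinal.iSup_le fun β => ?_
        have := Ordinal.le_iSup
          (fun x : δ.ToType => blockSum t ((Ordinal.ToType.mk (o := δ)).symm x).1)
          (Ordinal.ToType.mk β)
        simpa using this
      · exact Ordinal.iSup_le fun x => Ordinal.le_iSup _ _
    rw [key]
    apply Ordinal.iSup_lt_ord
    · rw [Cardinal.mk_toType, hreg.cof_eq]
      exact Cardinal.lt_ord.mp h
    · intro x
      exact ih _ ((Ordinal.ToType.mk (o := δ)).symm x).2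
        (((Ordinal.ToType.mk (o := δ)).symm x).2.trans h)

theorem one_add_lt_ord {c : Cardinal.{0}} (hc : ℵ₀ ≤ c) {i : Ordinal.{0}}
    (hi : i < c.ord) : 1 + i < c.ord := by
  have hω : Ordinal.omega0 ≤ c.ord := by
    rw [← Cardinal.ord_aleph0]; exact Cardinal.ord_le_ord.mpr hc
  exact Ordinal.isPrincipal_add_ord hc (lt_of_lt_of_le Ordinal.one_lt_omega0 hω) hi

/-- The set of indices `i < θ_ε` whose bit in the `ε`-block of `η` is `1`. -/
def trueSet (lam : Cardinal.{0}) (θ : Blw lam.ord → Cardinal.{0})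
    (η : CSp lam.ord) (ε : Blw lam.ord) : Set Ordinal.{0} :=
  {i | ∃ (_ : i < (θ ε).ord) (h : sFn lam θ ε.1 + i < lam.ord),
    η ⟨sFn lam θ ε.1 + i, h⟩ = true}

open Classical in
/-- The value `F(η)(ε)` of the block-coding map. -/
noncomputable def Fval (lam : Cardinal.{0}) (θ : Blw lam.ord → Cardinal.{0})
    (η : CSp lam.ord) (ε : Blw lam.ord) : Ordinal.{0} :=
  if h : (trueSet lam θ η ε).Nonempty then 1 + sInf (trueSet lam θ η ε) else 0

/-- for `λ` regular uncountable and `⟨θ_ε : ε < λ⟩` infinite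
cardinals below `λ`, the block-coding map `F : ^λ2 → ∏_{ε<λ} θ_ε` is
well-defined (in particular `s(ε) < λ`, `s(ε)+i < λ` and `1+i < θ_ε` for all
`i < θ_ε`) and continuous with respect to the `<λ`-box topologies. -/
theorem blockCoding_welldefined_continuous (lam : Cardinal.{0}) (hreg : lam.IsRegular)
    (hunc : ℵ₀ < lam) (θ : Blw lam.ord → Cardinal.{0})
    (hθ : ∀ ζ, ℵ₀ ≤ θ ζ ∧ θ ζ < lam) :
    (∀ ε : Blw lam.ord, sFn lam θ ε.1 < lam.ord) ∧
    (∀ ε : Blw lam.ord, ∀ i < (θ ε).ord,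
        1 + i < (θ ε).ord ∧ sFn lam θ ε.1 + i < lam.ord) ∧
    ∃ F : CSp lam.ord → PSp lam.ord θ, FSpec lam θ F ∧
      @Continuous _ _ (boxC lam.ord) (boxP lam.ord θ) F := by
  have hs : ∀ ε < lam.ord, sFn lam θ ε < lam.ord := sFn_lt_of_lt hreg θ hθ
  have hω : ∀ ε : Blw lam.ord, Ordinal.omega0 ≤ (θ ε).ord := by
    intro ε; rw [← Cardinal.ord_aleph0]; exact Cardinal.ord_le_ord.mpr (hθ ε).1
  have hpos : ∀ ε : Blw lam.ord, (0 : Ordinal.{0}) < (θ ε).ord :=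
    fun ε => lt_of_lt_of_le Ordinal.omega0_pos (hω ε)
  have hsa : ∀ ε : Blw lam.ord, ∀ i < (θ ε).ord, sFn lam θ ε.1 + i < lam.ord := by
    intro ε i hi
    exact Ordinal.isPrincipal_add_ord hreg.aleph0_le (hs ε.1 ε.2)
      (hi.trans (Cardinal.ord_lt_ord.mpr (hθ ε).2))
  refine ⟨fun ε => hs ε.1 ε.2, fun ε i hi => ⟨one_add_lt_ord (hθ ε).1 hi, hsa ε i hi⟩, ?_⟩
  -- the value of the coding map is in the right block
  have hFlt : ∀ (η : CSp lam.ord) (ε : Blw lam.ord), Fval lam θ η ε < (θ ε).ord := by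
    intro η ε
    rw [Fval]
    split_ifs with h
    · obtain ⟨hi, -, -⟩ := csInf_mem h
      exact one_add_lt_ord (hθ ε).1 hi
    · exact hpos ε
  set F : CSp lam.ord → PSp lam.ord θ :=
    fun η => ⟨fun ε => Fval lam θ η ε, fun ε => hFlt η ε⟩ with hF
  refine ⟨F, ?_, ?_⟩
  · -- FSpec
    intro η ε
    constructor
    · intro hall
      show Fval lam θ η ε = 0
      rw [Fval, dif_neg]
      rintro ⟨i, hi, hlt, htrue⟩
      rw [hall i hi hlt] at htrue
      exact Bool.false_ne_true htrue
    · intro i hi h htrue hmin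
      have hne : (trueSet lam θ η ε).Nonempty := ⟨i, hi, h, htrue⟩
      show Fval lam θ η ε = 1 + i
      rw [Fval, dif_pos hne]
      congr 1
      refine le_antisymm (csInf_le' ?_) (le_csInf hne ?_)
      · exact ⟨hi, h, htrue⟩
      rintro b ⟨hb, hbl, hbtrue⟩
      by_contra hlt
      rw [hmin b (lt_of_not_ge hlt) hbl] at hbtrue
      exact Bool.false_ne_true hbtrue
  · -- Continuity
    letI : TopologicalSpace (CSp lam.ord) := boxC lam.ord
    rw [boxP, continuous_generateFrom_iff]
    rintro S ⟨β, hβ, ν, -, rfl⟩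
    have hsβ : sFn lam θ β < lam.ord := hs β hβ
    -- agreement of F below β for functions agreeing below sFn β
    have hagree : ∀ η η' : CSp lam.ord,
        (∀ (α : Ordinal.{0}) (h : α < sFn lam θ β) (ho : α < lam.ord),
          η' ⟨α, ho⟩ = η ⟨α, ho⟩) →
        ∀ ε : Blw lam.ord, ε.1 < β → Fval lam θ η' ε = Fval lam θ η ε := by
      intro η η' hag ε hεβ
      have hset : trueSet lam θ η' ε = trueSet lam θ η ε := by
        have hblock : ∀ i < (θ ε).ord, sFn lam θ ε.1 + i < sFn lam θ β := by
          intro i hi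
          have h1 : sFn lam θ ε.1 + i < sFn lam θ (Order.succ ε.1) := by
            rw [sFn, blockSum_succ, dif_pos ε.2]
            exact (add_lt_add_iff_left _).mpr hi
          exact h1.trans_le (blockSum_mono _ β _ (Order.succ_le_of_lt hεβ))
        ext i
        constructor
        · rintro ⟨hi, hlt, hv⟩
          exact ⟨hi, hlt, by rw [← hag _ (hblock i hi) hlt]; exact hv⟩
        · rintro ⟨hi, hlt, hv⟩
          exact ⟨hi, hlt, by rw [hag _ (hblock i hi) hlt]; exact hv⟩
      rw [Fval, Fval, hset]
    have hU : F ⁻¹' cylP lam.ord θ β ν =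
        ⋃ η ∈ F ⁻¹' cylP lam.ord θ β ν,
          cylC lam.ord (sFn lam θ β) (fun α => η ⟨α.1, α.2.trans hsβ⟩) := by
      apply Set.Subset.antisymm
      · intro η₀ hη₀
        exact Set.mem_biUnion hη₀ (fun α hβ' ho => rfl)
      · intro η' hη'
        rw [Set.mem_iUnion₂] at hη'
        obtain ⟨η, hη, hcyl⟩ := hη'
        intro α hαβ ho
        have : Fval lam θ η' ⟨α, ho⟩ = Fval lam θ η ⟨α, ho⟩ :=
          hagree η η' (fun α' h' ho' => hcyl α' h' ho') ⟨α, ho⟩ hαβ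
        calc (F η').1 ⟨α, ho⟩ = Fval lam θ η ⟨α, ho⟩ := this
          _ = ν ⟨α, hαβ⟩ := hη α hαβ ho
    rw [hU]
    apply isOpen_iUnion
    intro η
    apply isOpen_iUnion
    intro _
    exact TopologicalSpace.isOpen_generateFrom_of_mem
      ⟨sFn lam θ β, hsβ, _, rfl⟩
end

section
/- Let λ be a regular uncountable cardinal and ⟨θ_ζ : ζ < λ⟩ a sequence of regular infinite cardinals with θ_ζ > |ζ| for every ζ < λ (for instance θ_ζ = (2^{|ζ|+ℵ₀})⁺). Let δ < λ and let ⟨p_α : α < δ⟩ be a ≤-increasing sequence in the θ̄-dominating forcing Q_θ̄ such that lg(η^{p_α}) ≥ α for every α < δ. Then the sequence ⟨p_α : α < δ⟩ has a least upper bound in Q_θ̄. -/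
open Cardinal Set

/-- A condition in the `θ̄`-dominating forcing `Q_θ̄` (for `o = λ.ord`): a pair
`(η, f)` with `f ∈ ∏_{ζ<λ} θ_ζ` and `η = f ↾ len` its trunk (an initial segment
of `f` of some length `len < λ`, so `η ∈ ∏_{ζ<len} θ_ζ`).  Since `η ⊴ f`, the
condition is determined by the pair `(len, f)`; the trunk is `η^p ζ = p.f ζ`
for `ζ < p.len`. -/
structure QTh (o : Ordinal.{0}) (θ : Blw o → Cardinal.{0}) where
  /-- the length `lg(η^p)` of the trunk -/
  len : Ordinal.{0}
  len_lt : len < o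
  /-- the function `f^p ∈ ∏_{ζ<λ} θ_ζ` -/
  f : Blw o → Ordinal.{0}
  f_lt : ∀ ζ, f ζ < (θ ζ).ord

/-- The order on `Q_θ̄`: (a) `η^p ⊴ η^q`, (b) `f^p ≤ f^q` pointwise, and
(c) `η^q(ζ) ≥ f^p(ζ)` for `lg(η^p) ≤ ζ < lg(η^q)`. -/
def QTh.Le (o : Ordinal.{0}) (θ : Blw o → Cardinal.{0}) (p q : QTh o θ) : Prop :=
  (p.len ≤ q.len ∧ ∀ ζ : Blw o, ζ.1 < p.len → q.f ζ = p.f ζ)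
  ∧ (∀ ζ : Blw o, p.f ζ ≤ q.f ζ)
  ∧ (∀ ζ : Blw o, p.len ≤ ζ.1 → ζ.1 < q.len → p.f ζ ≤ q.f ζ)

lemma blw_iSup_lt {c δ : Ordinal.{0}} (h : δ.card < c.cof)
    (g : {α : Ordinal.{0} // α < δ} → Ordinal.{0}) (hg : ∀ a, g a < c) : iSup g < c := by
  have e := (Ordinal.ToType.mk (o := δ)).symm
  have h1 : iSup g ≤ iSup (fun i => g ⟨(e i).1, (e i).2⟩) := by
    apply Ordinal.iSup_le
    intro a
    have : a = ⟨(e (e.symm ⟨a.1, a.2⟩)).1, (e (e.symm ⟨a.1, a.2⟩)).2⟩ := by simp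
    rw [this]
    exact Ordinal.le_iSup _ (e.symm ⟨a.1, a.2⟩)
  refine h1.trans_lt (Ordinal.iSup_lt_ord ?_ ?_)
  · rwa [Cardinal.mk_toType]
  · intro i; exact hg _

/-- for `λ` regular uncountable and `θ_ζ` regular infinite cardinals
with `θ_ζ > |ζ|`, every `≤`-increasing sequence `⟨p_α : α < δ⟩` (with `δ < λ`) in
`Q_θ̄` whose trunks satisfy `lg(η^{p_α}) ≥ α` has a least upper bound in `Q_θ̄`. -/
theorem qth_increasing_lub (lam : Cardinal.{0}) (hreg : lam.IsRegular) (hunc : ℵ₀ < lam)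
    (θ : Blw lam.ord → Cardinal.{0})
    (hθ : ∀ ζ : Blw lam.ord, (θ ζ).IsRegular ∧ ζ.1.card < θ ζ)
    (δ : Ordinal.{0}) (hδ : δ < lam.ord)
    (p : Blw δ → QTh lam.ord θ)
    (hinc : ∀ a b : Blw δ, a.1 ≤ b.1 → QTh.Le lam.ord θ (p a) (p b))
    (hlen : ∀ a : Blw δ, a.1 ≤ (p a).len) :
    ∃ q : QTh lam.ord θ, (∀ a, QTh.Le lam.ord θ (p a) q) ∧
      ∀ r : QTh lam.ord θ, (∀ a, QTh.Le lam.ord θ (p a) r) → QTh.Le lam.ord θ q r := by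
  have hsmall : Small.{0} (Blw δ) := Ordinal.small_Iio δ
  have hδc : δ.card < lam := Cardinal.lt_ord.mp hδ
  -- the trunk length of the candidate lub
  set ε : Ordinal.{0} := ⨆ a : Blw δ, (p a).len with hε
  have hεlt : ε < lam.ord := by
    refine blw_iSup_lt ?_ _ (fun a => (p a).len_lt)
    rwa [hreg.cof_eq]
  -- the function of the candidate lub
  set F : Blw lam.ord → Ordinal.{0} := fun ζ => ⨆ a : Blw δ, (p a).f ζ with hF
  -- stabilization of values below the trunk lengths
  have key : ∀ (a : Blw δ) (ζ : Blw lam.ord), ζ.1 < (p a).len → F ζ = (p a).f ζ := by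
    intro a ζ hζ
    refine le_antisymm (Ordinal.iSup_le fun b => ?_) (Ordinal.le_iSup (fun a => (p a).f ζ) a)
    rcases le_total b.1 a.1 with hba | hab
    · exact (hinc b a hba).2.1 ζ
    · exact ((hinc a b hab).1.2 ζ hζ).le
  have hFlt : ∀ ζ, F ζ < (θ ζ).ord := by
    intro ζ
    rcases lt_or_ge ζ.1 ε with hζ | hζ
    · obtain ⟨a, ha⟩ := (Ordinal.lt_iSup_iff).mp hζ
      rw [key a ζ ha]
      exact (p a).f_lt ζ
    · refine blw_iSup_lt ?_ _ (fun a => (p a).f_lt ζ)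
      rw [(hθ ζ).1.cof_eq, ← Cardinal.lt_ord]
      have hζθ : ζ.1 < (θ ζ).ord := Cardinal.lt_ord.mpr (hθ ζ).2
      have hsucc : ζ.1 + 1 < (θ ζ).ord :=
        by simpa [Order.succ_eq_add_one] using (Cardinal.isSuccLimit_ord (hθ ζ).1.aleph0_le).succ_lt hζθ
      refine lt_of_le_of_lt ?_ hsucc
      by_contra hlt
      push_neg at hlt
      have h1 : ζ.1 + 1 < δ := hlt
      have h2 : (ζ.1 + 1 : Ordinal) ≤ (p ⟨ζ.1 + 1, h1⟩).len := hlen ⟨ζ.1 + 1, h1⟩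
      have h3 : (p ⟨ζ.1 + 1, h1⟩).len ≤ ε := Ordinal.le_iSup (fun a => (p a).len) ⟨ζ.1 + 1, h1⟩
      have : ζ.1 + 1 ≤ ζ.1 := (h2.trans h3).trans hζ
      exact absurd this (by simp)
  refine ⟨⟨ε, hεlt, F, hFlt⟩, fun a => ?_, fun r hr => ?_⟩
  · refine ⟨⟨Ordinal.le_iSup (fun a => (p a).len) a, fun ζ hζ => key a ζ hζ⟩,
      fun ζ => Ordinal.le_iSup (fun a => (p a).f ζ) a,
      fun ζ _ _ => Ordinal.le_iSup (fun a => (p a).f ζ) a⟩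
  · refine ⟨⟨Ordinal.iSup_le fun a => (hr a).1.1, fun ζ hζ => ?_⟩,
      fun ζ => Ordinal.iSup_le fun a => (hr a).2.1 ζ,
      fun ζ _ _ => Ordinal.iSup_le fun a => (hr a).2.1 ζ⟩
    obtain ⟨a, ha⟩ := (Ordinal.lt_iSup_iff).mp hζ
    exact ((hr a).1.2 ζ ha).trans (key a ζ ha).symm
end
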